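/- arXiv:1401.0915 — 2 statements merged into one kernel-verified Lean document; each statement's English description precedes it below -/
import Mathlib

section
/- If K/k is a finite Galois extension with cyclic Galois group of order n, and c ∈ k^×, then the affine variety defined by Norm_{K/k}(Ξ) = c has a k-rational point if and only if c is a norm from K, if and only if the class of the cyclic algebra (K/k, c) is trivial in the Brauer group of k. -/
set_option maxHeartbeats 1000000 in
/-- Let `K/k` be a finite Galois extension with cyclic Galois group of order `n`, generated
by `σ`, and let `c ∈ k^×`.  Let `B` be the cyclic algebra `(K/k, σ, c)`: the `k`-algebra
generated by (a copy of) `K` and an element `ξ` with `ξ^n = c` and `ξ·λ = σ(λ)·ξ` for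
`λ ∈ K`, of dimension `n²`.  Then the affine variety `Norm_{K/k}(Ξ) = c` has a `k`-rational
point — i.e. `c` is a norm from `K` — if and only if the class of the cyclic algebra
`(K/k, σ, c)` is trivial in the Brauer group of `k`, i.e. `B` is a matrix algebra. -/
theorem normEquation_hasPoint_iff_cyclicAlgebra_trivial
    {k K : Type*} [Field k] [Field K] [Algebra k K] [IsGalois k K]
    (n : ℕ) (hn : 0 < n) (hrank : Module.finrank k K = n)
    (σ : K ≃ₐ[k] K) (hσ : ∀ τ : K ≃ₐ[k] K, τ ∈ Subgroup.zpowers σ)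
    (c : k) (hc : c ≠ 0)
    (B : Type*) [Ring B] [Algebra k B]
    (ι : K →ₐ[k] B) (hι : Function.Injective ι) (ξ : B)
    (hξ : ξ ^ n = algebraMap k B c)
    (hcomm : ∀ a : K, ξ * ι a = ι (σ a) * ξ)
    (hgen : Algebra.adjoin k (Set.range ⇑ι ∪ {ξ}) = ⊤)
    (hdim : Module.finrank k B = n ^ 2) :
    (∃ x : K, Algebra.norm k x = c) ↔ Nonempty (B ≃ₐ[k] Matrix (Fin n) (Fin n) k) := by
  haveI : FiniteDimensional k K := FiniteDimensional.of_finrank_pos (hrank ▸ hn)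
  have horder : orderOf σ = n := by
    rw [orderOf_eq_card_of_forall_mem_zpowers hσ,
      IsGalois.card_aut_eq_finrank, hrank]
  have hσn : σ ^ n = 1 := by rw [← horder]; exact pow_orderOf_eq_one σ
  have halg : ∀ r : k, algebraMap k B r = ι (algebraMap k K r) := fun r =>
    (ι.commutes r).symm
  have hcommpow : ∀ (i : ℕ) (a : K), ξ ^ i * ι a = ι ((σ ^ i) a) * ξ ^ i := by
    intro i
    induction i with
    | zero => intro a; simp
    | succ i ih =>
      intro a
      rw [pow_succ, mul_assoc, hcomm, ← mul_assoc, ih (σ a), mul_assoc, ← pow_succ]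
      congr 2
  -- prod over range of sigma-powers
  have hprodnorm : ∀ x : K, algebraMap k K (Algebra.norm k x)
      = ∏ j ∈ Finset.range n, (σ ^ j) x := by
    intro x
    rw [Algebra.norm_eq_prod_automorphisms]
    have hbij : Function.Bijective (fun j : Fin n => σ ^ (j : ℕ)) := by
      rw [Fintype.bijective_iff_injective_and_card]
      constructor
      · intro i j hij
        exact Fin.ext (pow_injOn_Iio_orderOf (by simpa [horder] using i.2)
          (by simpa [horder] using j.2) hij)
      · rw [Fintype.card_fin, ← Nat.card_eq_fintype_card, IsGalois.card_aut_eq_finrank, hrank]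
    rw [← Fintype.prod_bijective _ hbij _ (fun τ : K ≃ₐ[k] K => τ x) (fun _ => rfl)]
    rw [Fin.prod_univ_eq_prod_range (fun j => (σ ^ j) x) n]
  -- Backward direction
  have backward : Nonempty (B ≃ₐ[k] Matrix (Fin n) (Fin n) k) → ∃ x : K, Algebra.norm k x = c := by
    rintro ⟨ψ⟩
    set V := Fin n → k with hV
    let ρ : B →ₐ[k] Module.End k V :=
      (Matrix.toLinAlgEquiv' : Matrix (Fin n) (Fin n) k ≃ₐ[k] Module.End k V).toAlgHom.comp
        ψ.toAlgHom
    letI : Module K V := Module.compHom V ((ρ.toRingHom).comp ι.toRingHom)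
    have hsmul : ∀ (a : K) (w : V), a • w = ρ (ι a) w := fun _ _ => rfl
    haveI : IsScalarTower k K V := ⟨by
      intro r a w
      rw [hsmul, hsmul, Algebra.smul_def, map_mul, map_mul]
      have : ρ (ι (algebraMap k K r)) = algebraMap k (Module.End k V) r := by
        rw [← halg]; exact ρ.commutes r
      rw [this]
      simp [Algebra.smul_def, Module.algebraMap_end_apply]⟩
    have hfkV : Module.finrank k V = n := Module.finrank_fin_fun k
    have hrankV : Module.finrank K V = 1 := by
      have := Module.finrank_mul_finrank k K V
      rw [hrank, hfkV] at this
      exact Nat.eq_of_mul_eq_mul_left hn (by rw [this, mul_one])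
    obtain ⟨v, hv0, hv⟩ := finrank_eq_one_iff'.mp hrankV
    obtain ⟨x, hx⟩ := hv (ρ ξ v)
    have hsemilin : ∀ (a : K) (w : V), ρ ξ (a • w) = σ a • ρ ξ w := by
      intro a w
      rw [hsmul, hsmul, ← Module.End.mul_apply, ← map_mul, hcomm, map_mul]
      rfl
    have hpow : ∀ i : ℕ, ρ (ξ ^ i) v = (∏ j ∈ Finset.range i, (σ ^ j) x) • v := by
      intro i
      induction i with
      | zero => simp
      | succ i ih =>
        have hmp : σ (∏ j ∈ Finset.range i, (σ ^ j) x)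
            = ∏ j ∈ Finset.range i, σ ((σ ^ j) x) := map_prod σ _ _
        have hterm : ∀ j, σ ((σ ^ j) x) = (σ ^ (j + 1)) x := fun j => by
          rw [pow_succ']; rfl
        rw [pow_succ', map_mul, Module.End.mul_apply, ih, hsemilin, ← hx, smul_smul, hmp,
          Finset.prod_range_succ']
        simp only [hterm, pow_zero, AlgEquiv.one_apply]
    have hkey : (∏ j ∈ Finset.range n, (σ ^ j) x) • v = (algebraMap k K c) • v := by
      have h1 : ρ (ξ ^ n) v = (∏ j ∈ Finset.range n, (σ ^ j) x) • v := hpow n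
      rw [hξ, AlgHom.commutes, Module.algebraMap_end_apply, ← algebraMap_smul K c v] at h1
      exact h1.symm
    have hxc : algebraMap k K (Algebra.norm k x) = algebraMap k K c := by
      rw [hprodnorm x]
      have := sub_smul (∏ j ∈ Finset.range n, (σ ^ j) x) (algebraMap k K c) v
      rw [hkey, sub_self] at this
      have h0 := (smul_eq_zero.mp this).resolve_right hv0
      exact sub_eq_zero.mp h0
    exact ⟨x, (algebraMap k K).injective hxc⟩
  -- Forward direction
  have forward : (∃ x : K, Algebra.norm k x = c) → Nonempty (B ≃ₐ[k] Matrix (Fin n) (Fin n) k) := by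
    rintro ⟨x, hx⟩
    haveI : Nontrivial B := ⟨⟨0, 1, fun h => one_ne_zero (hι (by simp [h]))⟩⟩
    have hx0 : x ≠ 0 := by
      rintro rfl
      exact hc (by rw [← hx, Algebra.norm_zero])
    set m : K →ₐ[k] Module.End k K := Algebra.lmul k K with hm
    set e : Module.End k K := (m x) * σ.toLinearMap with he
    have heapp : ∀ w : K, e w = x * σ w := fun w => rfl
    have hepow : ∀ (i : ℕ) (w : K),
        (e ^ i) w = (∏ j ∈ Finset.range i, (σ ^ j) x) * (σ ^ i) w := by
      intro i
      induction i with
      | zero => intro w; simp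
      | succ i ih =>
        intro w
        have h1 : (σ ^ i) (x * σ w) = (σ ^ i) x * (σ ^ (i + 1)) w := by
          have h0 : (σ ^ (i + 1)) w = (σ ^ i) (σ w) := by rw [pow_succ]; rfl
          rw [map_mul, h0]
        rw [pow_succ, Module.End.mul_apply, ih (e w), heapp, h1, Finset.prod_range_succ]
        ring
    have hPne : ∀ i : ℕ, (∏ j ∈ Finset.range i, (σ ^ j) x) ≠ 0 :=
      fun i => Finset.prod_ne_zero_iff.mpr fun j _ =>
        fun h => hx0 ((σ ^ j).injective (by simpa using h))
    have hPn : (∏ j ∈ Finset.range n, (σ ^ j) x) = algebraMap k K c := by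
      rw [← hprodnorm x, hx]
    have heen : e ^ n = algebraMap k (Module.End k K) c := by
      apply LinearMap.ext
      intro w
      rw [hepow n w, hσn, hPn, Module.algebraMap_end_apply, AlgEquiv.one_apply,
        Algebra.smul_def]
    have hmapp : ∀ (a w : K), m a w = a * w := fun a w => rfl
    have hem : ∀ (i : ℕ) (a : K), e ^ i * m a = m ((σ ^ i) a) * e ^ i := by
      intro i a
      apply LinearMap.ext
      intro w
      rw [Module.End.mul_apply, Module.End.mul_apply, hmapp, hmapp, hepow, hepow, map_mul]
      ring
    -- basis of K
    obtain ⟨bK⟩ : Nonempty (Module.Basis (Fin n) k K) := ⟨Module.finBasisOfFinrankEq k K hrank⟩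
    -- spanning family of B
    set v : Fin n × Fin n → B := fun p => ι (bK p.2) * ξ ^ (p.1 : ℕ) with hv
    set S : Submodule k B := Submodule.span k (Set.range v) with hS
    have hmem1 : ∀ (a : K) (i : ℕ), i < n → ι a * ξ ^ i ∈ S := by
      intro a i hi
      have ha : ι a = ∑ j : Fin n, bK.repr a j • ι (bK j) := by
        conv_lhs => rw [← Module.Basis.sum_repr bK a]
        rw [map_sum]
        simp_rw [map_smul]
      rw [ha, Finset.sum_mul]
      refine Submodule.sum_mem _ fun j _ => ?_
      rw [smul_mul_assoc]
      exact Submodule.smul_mem _ _ (Submodule.subset_span ⟨(⟨i, hi⟩, j), rfl⟩)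
    have hmem : ∀ (i : ℕ) (a : K), ι a * ξ ^ i ∈ S := by
      intro i
      induction i using Nat.strong_induction_on with
      | _ i ih =>
        intro a
        by_cases hi : i < n
        · exact hmem1 a i hi
        · push_neg at hi
          have hin : i - n < i := by omega
          have hsplit : ξ ^ i = ι (algebraMap k K c) * ξ ^ (i - n) := by
            conv_lhs => rw [show i = n + (i - n) by omega]
            rw [pow_add, hξ, halg]
          rw [hsplit, ← mul_assoc, ← map_mul]
          exact ih _ hin _
    have hspan : ⊤ ≤ S := by
      have h1S : (1 : B) ∈ S := by simpa using hmem 0 1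
      have hmulS : ∀ y z : B, y ∈ S → z ∈ S → y * z ∈ S := by
        have hgenmul : ∀ (p q : Fin n × Fin n), v p * v q ∈ S := by
          intro p q
          have : v p * v q = ι (bK p.2 * (σ ^ (p.1 : ℕ)) (bK q.2)) * ξ ^ ((p.1 : ℕ) + (q.1 : ℕ)) := by
            rw [hv, map_mul, pow_add]
            simp only []
            rw [mul_assoc, ← mul_assoc (ξ ^ (p.1 : ℕ)), hcommpow, mul_assoc, ← mul_assoc]
          rw [this]
          exact hmem _ _
        intro y z hy hz
        induction hy using Submodule.span_induction with
        | mem y hy =>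
          obtain ⟨p, rfl⟩ := hy
          induction hz using Submodule.span_induction with
          | mem z hz => obtain ⟨q, rfl⟩ := hz; exact hgenmul p q
          | zero => simpa using Submodule.zero_mem S
          | add z w _ _ hz hw => rw [mul_add]; exact Submodule.add_mem _ hz hw
          | smul r z _ hz => rw [mul_smul_comm]; exact Submodule.smul_mem _ _ hz
        | zero => simpa using Submodule.zero_mem S
        | add y w _ _ hy hw => rw [add_mul]; exact Submodule.add_mem _ hy hw
        | smul r y _ hy => rw [smul_mul_assoc]; exact Submodule.smul_mem _ _ hy
      set T : Subalgebra k B := Submodule.toSubalgebra S h1S hmulS with hT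
      have : Algebra.adjoin k (Set.range ⇑ι ∪ {ξ}) ≤ T := by
        apply Algebra.adjoin_le
        rintro z (⟨a, rfl⟩ | hz)
        · exact (by simpa using hmem 0 a : ι a ∈ S)
        · simp only [Set.mem_singleton_iff] at hz
          rw [hz]
          exact (by simpa using hmem 1 1 : ξ ∈ S)
      rw [hgen] at this
      intro z _
      exact this (Algebra.mem_top)
    -- basis of B
    have hcard : Fintype.card (Fin n × Fin n) = Module.finrank k B := by
      simp [hdim, sq]
    set bB : Module.Basis (Fin n × Fin n) k B := basisOfTopLeSpanOfCardEqFinrank v hspan hcard with hbB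
    have hbBv : ∀ p, bB p = v p := fun p => by
      rw [hbB, coe_basisOfTopLeSpanOfCardEqFinrank]
    set Φ : B →ₗ[k] Module.End k K :=
      Module.Basis.constr bB k (fun p => m (bK p.2) * e ^ (p.1 : ℕ)) with hΦ
    have hΦb : ∀ p, Φ (v p) = m (bK p.2) * e ^ (p.1 : ℕ) := fun p => by
      rw [← hbBv p, hΦ]
      exact Module.Basis.constr_basis bB k _ p
    -- key computation
    have hkey1 : ∀ (a : K) (i : Fin n), Φ (ι a * ξ ^ (i : ℕ)) = m a * e ^ (i : ℕ) := by
      intro a i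
      have ha : ι a * ξ ^ (i : ℕ) = ∑ j : Fin n, bK.repr a j • v (i, j) := by
        have h0 : ι a = ∑ j : Fin n, bK.repr a j • ι (bK j) := by
          conv_lhs => rw [← Module.Basis.sum_repr bK a]
          rw [map_sum]
          simp_rw [map_smul]
        rw [h0, Finset.sum_mul]
        simp_rw [smul_mul_assoc]
        rfl
      rw [ha, map_sum]
      simp_rw [map_smul, hΦb]
      simp_rw [← smul_mul_assoc]
      rw [← Finset.sum_mul]
      congr 1
      simp_rw [← map_smul]
      rw [← map_sum]
      congr 1
      exact Module.Basis.sum_repr bK a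
    have hkey : ∀ (i : ℕ) (a : K), Φ (ι a * ξ ^ i) = m a * e ^ i := by
      intro i
      induction i using Nat.strong_induction_on with
      | _ i ih =>
        intro a
        by_cases hi : i < n
        · exact hkey1 a ⟨i, hi⟩
        · push_neg at hi
          have hin : i - n < i := by omega
          have hsplitB : ξ ^ i = ι (algebraMap k K c) * ξ ^ (i - n) := by
            conv_lhs => rw [show i = n + (i - n) by omega]
            rw [pow_add, hξ, halg]
          have hsplitE : e ^ i = m (algebraMap k K c) * e ^ (i - n) := by
            conv_lhs => rw [show i = n + (i - n) by omega]
            rw [pow_add, heen, m.commutes]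
          rw [hsplitB, ← mul_assoc, ← map_mul, ih _ hin, hsplitE, map_mul, mul_assoc]
    -- product of two generators: algebraic identity in End
    have hassoc : ∀ (a b : K) (i j : ℕ),
        (m a * e ^ i) * (m b * e ^ j) = m (a * (σ ^ i) b) * e ^ (i + j) := by
      intro a b i j
      rw [map_mul, pow_add, mul_assoc, ← mul_assoc (e ^ i), hem]
      simp only [mul_assoc]
    have hvmul : ∀ (p q : Fin n × Fin n),
        v p * v q = ι (bK p.2 * (σ ^ (p.1 : ℕ)) (bK q.2)) * ξ ^ ((p.1 : ℕ) + (q.1 : ℕ)) := by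
      intro p q
      rw [hv, map_mul, pow_add]
      simp only []
      rw [mul_assoc, ← mul_assoc (ξ ^ (p.1 : ℕ)), hcommpow, mul_assoc, ← mul_assoc]
    have hmulΦ : ∀ y z : B, Φ (y * z) = Φ y * Φ z := by
      have hb2 : ∀ p q, Φ (v p * v q) = Φ (v p) * Φ (v q) := by
        intro p q
        rw [hvmul p q, hkey, hΦb p, hΦb q, hassoc]
      intro y z
      let F1 : B →ₗ[k] B →ₗ[k] Module.End k K := (LinearMap.mul k B).compr₂ Φ
      let F2 : B →ₗ[k] B →ₗ[k] Module.End k K := (LinearMap.mul k (Module.End k K)).compl₁₂ Φ Φ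
      have hF : F1 = F2 := by
        apply LinearMap.ext_basis bB bB
        intro p q
        show Φ (bB p * bB q) = Φ (bB p) * Φ (bB q)
        rw [hbBv, hbBv]
        exact hb2 p q
      exact LinearMap.congr_fun (LinearMap.congr_fun hF y) z
    have honeΦ : Φ 1 = 1 := by
      have h0 : (1 : B) = ι 1 * ξ ^ 0 := by simp
      rw [h0, hkey]
      simp
    -- injectivity via Dedekind independence of characters
    have hinj : Function.Injective Φ := by
      rw [← LinearMap.ker_eq_bot, LinearMap.ker_eq_bot']
      intro z hz
      set r := bB.repr z with hr
      have hz1 : z = ∑ p : Fin n × Fin n, r p • v p := by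
        conv_lhs => rw [← Module.Basis.sum_repr bB z]
        simp_rw [hbBv]
        rfl
      set g : Fin n → K := fun i => ∑ j : Fin n, r (i, j) • bK j with hg
      set P : ℕ → K := fun i => ∏ j ∈ Finset.range i, (σ ^ j) x with hP
      have hsum : ∀ w : K, ∑ i : Fin n, (g i * P (i : ℕ)) * (σ ^ (i : ℕ)) w = 0 := by
        intro w
        have h0 : Φ z w = 0 := by rw [hz, LinearMap.zero_apply]
        conv_lhs at h0 => rw [hz1, map_sum]
        rw [LinearMap.sum_apply] at h0
        simp only [map_smul, hΦb, LinearMap.smul_apply, Module.End.mul_apply, hmapp, hepow,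
          smul_eq_mul] at h0
        rw [Fintype.sum_prod_type] at h0
        rw [← h0]
        refine Finset.sum_congr rfl fun i _ => ?_
        rw [hg]
        simp only [Finset.sum_mul, smul_mul_assoc, smul_eq_mul]
        refine Finset.sum_congr rfl fun j _ => ?_
        rw [hP]
        ring
      set G : Fin n → (K →* K) := fun i => MonoidHomClass.toMonoidHom (σ ^ (i : ℕ)) with hG
      have hGinj : Function.Injective G := by
        intro i j hij
        apply Fin.ext
        apply pow_injOn_Iio_orderOf (x := σ) (by simpa [horder] using i.2)
          (by simpa [horder] using j.2)
        apply AlgEquiv.ext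
        intro w
        exact DFunLike.congr_fun hij w
      have hLI := (linearIndependent_monoidHom K K).comp G hGinj
      rw [Fintype.linearIndependent_iff] at hLI
      have hcoef : ∀ i : Fin n, g i * P (i : ℕ) = 0 := by
        apply hLI
        funext w
        rw [Finset.sum_apply]
        simp only [Pi.smul_apply, smul_eq_mul]
        exact hsum w
      have hgzero : ∀ i : Fin n, g i = 0 := fun i =>
        (mul_eq_zero.mp (hcoef i)).resolve_right (hPne (i : ℕ))
      have hrzero : ∀ p : Fin n × Fin n, r p = 0 := by
        intro p
        have hLIK := bK.linearIndependent
        rw [Fintype.linearIndependent_iff] at hLIK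
        have := hLIK (fun j => r (p.1, j)) (hgzero p.1) p.2
        simpa using this
      rw [hz1]
      apply Finset.sum_eq_zero
      intro p _
      rw [hrzero p, zero_smul]
    -- bijectivity by dimension count
    haveI hfinB : FiniteDimensional k B := FiniteDimensional.of_finrank_pos
      (by rw [hdim]; positivity)
    have hdimeq : Module.finrank k B = Module.finrank k (Module.End k K) := by
      rw [hdim, Module.finrank_linearMap, hrank]
      ring
    have hsurj : Function.Surjective Φ :=
      (LinearMap.injective_iff_surjective_of_finrank_eq_finrank hdimeq).mp hinj
    let Φa : B →ₐ[k] Module.End k K := AlgHom.ofLinearMap Φ honeΦ hmulΦ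
    exact ⟨(AlgEquiv.ofBijective Φa ⟨hinj, hsurj⟩).trans (LinearMap.toMatrixAlgEquiv bK)⟩
  exact ⟨forward, backward⟩
end

section
/- Let F be a field containing a primitive n-th root of unity ζ, with n invertible in F, and let b ∈ F^×. Then F[t]/(t^n − b) with the F-algebra automorphism t ↦ ζt is a cyclic extension (Galois Z/n-algebra) of F, and for c ∈ F^×, the cyclic algebra attached to this extension and c equals the symbol algebra (b,c)_ζ. -/
/-- The defining relations of the symbol algebra `(b,c)_ζ`: it is generated by `u, v`
with `uⁿ = b`, `vⁿ = c`, `v·u = ζ·u·v`. -/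
inductive SymbolRel (F : Type*) [Field F] (n : ℕ) (ζ b c : F) :
    FreeAlgebra F (Fin 2) → FreeAlgebra F (Fin 2) → Prop
  | u : SymbolRel F n ζ b c ((FreeAlgebra.ι F (0 : Fin 2)) ^ n) (algebraMap F _ b)
  | v : SymbolRel F n ζ b c ((FreeAlgebra.ι F (1 : Fin 2)) ^ n) (algebraMap F _ c)
  | comm : SymbolRel F n ζ b c (FreeAlgebra.ι F (1 : Fin 2) * FreeAlgebra.ι F (0 : Fin 2))
      (algebraMap F _ ζ * (FreeAlgebra.ι F (0 : Fin 2) * FreeAlgebra.ι F (1 : Fin 2)))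

/-- The symbol algebra `(b,c)_ζ` over `F`. -/
abbrev SymbolAlgebra (F : Type*) [Field F] (n : ℕ) (ζ b c : F) : Type _ :=
  RingQuot (SymbolRel F n ζ b c)

section SymbolAux

variable (F : Type*) [Field F] (n : ℕ) (ζ b c : F)

/-- The generator `u` of the symbol algebra. -/
noncomputable def symU : SymbolAlgebra F n ζ b c :=
  RingQuot.mkAlgHom F (SymbolRel F n ζ b c) (FreeAlgebra.ι F 0)

/-- The generator `v` of the symbol algebra. -/
noncomputable def symV : SymbolAlgebra F n ζ b c :=
  RingQuot.mkAlgHom F (SymbolRel F n ζ b c) (FreeAlgebra.ι F 1)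

variable {F n ζ b c}

lemma symU_pow : (symU F n ζ b c) ^ n = algebraMap F _ b := by
  have := RingQuot.mkAlgHom_rel F (SymbolRel.u : SymbolRel F n ζ b c _ _)
  simpa [symU, map_pow] using this

lemma symV_pow : (symV F n ζ b c) ^ n = algebraMap F _ c := by
  have := RingQuot.mkAlgHom_rel F (SymbolRel.v : SymbolRel F n ζ b c _ _)
  simpa [symV, map_pow] using this

lemma symVU : symV F n ζ b c * symU F n ζ b c =
    ζ • (symU F n ζ b c * symV F n ζ b c) := by
  have := RingQuot.mkAlgHom_rel F (SymbolRel.comm : SymbolRel F n ζ b c _ _)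
  rw [Algebra.smul_def]
  simpa [symU, symV, map_mul] using this

local notation "U" => symU F n ζ b c
local notation "V" => symV F n ζ b c

lemma symV_pow_mul_symU (j : ℕ) : V ^ j * U = ζ ^ j • (U * V ^ j) := by
  induction j with
  | zero => simp
  | succ j ih =>
    calc V ^ (j + 1) * U = V ^ j * (V * U) := by rw [pow_succ, mul_assoc]
    _ = V ^ j * (ζ • (U * V)) := by rw [symVU]
    _ = ζ • (V ^ j * U * V) := by rw [mul_smul_comm, mul_assoc]
    _ = ζ • ((ζ ^ j • (U * V ^ j)) * V) := by rw [ih]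
    _ = ζ ^ (j + 1) • (U * V ^ (j + 1)) := by
        rw [smul_mul_assoc, smul_smul, pow_succ, pow_succ, mul_assoc, mul_comm ζ]

lemma symV_pow_mul_symU_pow (j k : ℕ) :
    V ^ j * U ^ k = ζ ^ (j * k) • (U ^ k * V ^ j) := by
  induction k with
  | zero => simp
  | succ k ih =>
    calc V ^ j * U ^ (k + 1) = (V ^ j * U ^ k) * U := by rw [pow_succ, mul_assoc]
    _ = ζ ^ (j * k) • (U ^ k * (V ^ j * U)) := by rw [ih, smul_mul_assoc, mul_assoc]
    _ = ζ ^ (j * k) • (U ^ k * (ζ ^ j • (U * V ^ j))) := by rw [symV_pow_mul_symU]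
    _ = (ζ ^ (j * k) * ζ ^ j) • (U ^ k * U * V ^ j) := by
        rw [mul_smul_comm, smul_smul, mul_assoc]
    _ = ζ ^ (j * (k + 1)) • (U ^ (k + 1) * V ^ j) := by
        rw [← pow_add, ← pow_succ, Nat.mul_succ]

lemma symU_pow_reduce (hn : 0 < n) (m : ℕ) :
    U ^ m = b ^ (m / n) • U ^ (m % n) := by
  conv_lhs => rw [← Nat.div_add_mod m n]
  rw [pow_add, pow_mul, symU_pow, ← map_pow, ← Algebra.smul_def]

lemma symV_pow_reduce (hn : 0 < n) (m : ℕ) :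
    V ^ m = c ^ (m / n) • V ^ (m % n) := by
  conv_lhs => rw [← Nat.div_add_mod m n]
  rw [pow_add, pow_mul, symV_pow, ← map_pow, ← Algebra.smul_def]

lemma symbol_span_top (hn : 0 < n) :
    Submodule.span F (Set.range fun p : Fin n × Fin n =>
      U ^ (p.1 : ℕ) * V ^ (p.2 : ℕ)) = ⊤ := by
  set M : Submodule F (SymbolAlgebra F n ζ b c) :=
    Submodule.span F (Set.range fun p : Fin n × Fin n =>
      U ^ (p.1 : ℕ) * V ^ (p.2 : ℕ)) with hM
  have hmem : ∀ i j : ℕ, U ^ i * V ^ j ∈ M := by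
    intro i j
    rw [symU_pow_reduce hn, symV_pow_reduce hn, smul_mul_smul_comm]
    exact M.smul_mem _ (Submodule.subset_span
      ⟨(⟨i % n, Nat.mod_lt _ hn⟩, ⟨j % n, Nat.mod_lt _ hn⟩), rfl⟩)
  have h1 : (1 : SymbolAlgebra F n ζ b c) ∈ M := by
    simpa using hmem 0 0
  have hmul : ∀ x y : SymbolAlgebra F n ζ b c, x ∈ M → y ∈ M → x * y ∈ M := by
    have hMM : M * M ≤ M := by
      rw [hM, Submodule.span_mul_span, Submodule.span_le]
      rintro _ ⟨x, ⟨p, rfl⟩, y, ⟨q, rfl⟩, rfl⟩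
      simp only [SetLike.mem_coe]
      rw [mul_assoc, ← mul_assoc (V ^ (p.2 : ℕ)), symV_pow_mul_symU_pow,
        smul_mul_assoc, mul_smul_comm]
      refine M.smul_mem _ ?_
      rw [mul_assoc (U ^ (q.1 : ℕ)), ← pow_add, ← mul_assoc, ← pow_add]
      exact hmem _ _
    exact fun x y hx hy => hMM (Submodule.mul_mem_mul hx hy)
  have hUV : Algebra.adjoin F ({U, V} : Set (SymbolAlgebra F n ζ b c)) = ⊤ := by
    have h2 : Algebra.adjoin F (Set.range (FreeAlgebra.ι F : Fin 2 → FreeAlgebra F (Fin 2)))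
        = ⊤ := FreeAlgebra.adjoin_range_ι F (Fin 2)
    have h3 : (⊤ : Subalgebra F (FreeAlgebra F (Fin 2))).map
        (RingQuot.mkAlgHom F (SymbolRel F n ζ b c)) = ⊤ := by
      rw [Algebra.map_top]
      exact (AlgHom.range_eq_top _).mpr (RingQuot.mkAlgHom_surjective F _)
    rw [← h2, AlgHom.map_adjoin] at h3
    rw [eq_top_iff, ← h3]
    apply Algebra.adjoin_mono
    rintro _ ⟨_, ⟨i, rfl⟩, rfl⟩
    fin_cases i
    · exact Set.mem_insert _ _
    · exact Set.mem_insert_of_mem _ rfl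
  have : (M.toSubalgebra h1 hmul : Subalgebra F (SymbolAlgebra F n ζ b c)) = ⊤ := by
    rw [eq_top_iff, ← hUV, Algebra.adjoin_le_iff]
    rintro x (rfl | rfl)
    · show U ∈ M; simpa using hmem 1 0
    · show V ∈ M; simpa using hmem 0 1
  have h4 := congrArg Subalgebra.toSubmodule this
  simpa using h4

end SymbolAux

/-- Let `F` contain a primitive `n`-th root of unity `ζ`, with `n` invertible in `F`, and
let `b ∈ F^×`.  Then `A = F[t]/(tⁿ − b)` with the automorphism `t ↦ ζt` is a cyclic
(Galois `ℤ/n`-) algebra over `F`: there is an `F`-algebra automorphism `σ` with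
`σ(t) = ζ·t`, of order `n`, whose fixed subalgebra is `F`; and for `c ∈ F^×` the cyclic
algebra attached to `(A, σ)` and `c` — any `F`-algebra `B` generated by a copy `ι(A)` of
`A` together with `ξ` satisfying `ξⁿ = c`, `ξ·ι(a) = ι(σ a)·ξ`, of dimension `n²` — is
isomorphic to the symbol algebra `(b,c)_ζ`. -/
theorem adjoinRoot_cyclic_and_cyclicAlgebra_eq_symbolAlgebra
    (F : Type*) [Field F] (n : ℕ) (hn : 0 < n) (hn' : (n : F) ≠ 0)
    (ζ : F) (hζ : IsPrimitiveRoot ζ n) (b : F) (hb : b ≠ 0) (c : F) (hc : c ≠ 0) :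
    ∃ σ : AdjoinRoot (Polynomial.X ^ n - Polynomial.C b) ≃ₐ[F]
          AdjoinRoot (Polynomial.X ^ n - Polynomial.C b),
      σ (AdjoinRoot.root _) = algebraMap F _ ζ * AdjoinRoot.root _ ∧
      orderOf σ = n ∧
      (∀ a, σ a = a → a ∈ (algebraMap F (AdjoinRoot (Polynomial.X ^ n - Polynomial.C b))).range) ∧
      ∀ (B : Type*) (_ : Ring B) (_ : Algebra F B)
        (ι : AdjoinRoot (Polynomial.X ^ n - Polynomial.C b) →ₐ[F] B)
        (_ : Function.Injective ι) (ξ : B),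
        ξ ^ n = algebraMap F B c →
        (∀ a, ξ * ι a = ι (σ a) * ξ) →
        Algebra.adjoin F (Set.range ⇑ι ∪ {ξ}) = ⊤ →
        Module.finrank F B = n ^ 2 →
        Nonempty (B ≃ₐ[F] SymbolAlgebra F n ζ b c) := by
  classical
  have hne : n ≠ 0 := hn.ne'
  set A := AdjoinRoot (Polynomial.X ^ n - Polynomial.C b) with hA
  have hmonic : (Polynomial.X ^ n - Polynomial.C b).Monic := Polynomial.monic_X_pow_sub_C b hne
  have hdeg : (Polynomial.X ^ n - Polynomial.C b).natDegree = n :=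
    Polynomial.natDegree_X_pow_sub_C
  have hroot : (AdjoinRoot.root (Polynomial.X ^ n - Polynomial.C b)) ^ n
      = algebraMap F A b := by
    have h0 := AdjoinRoot.eval₂_root (Polynomial.X ^ n - Polynomial.C b)
    simp only [Polynomial.eval₂_sub, Polynomial.eval₂_X_pow, Polynomial.eval₂_C,
      sub_eq_zero] at h0
    rw [h0, AdjoinRoot.algebraMap_eq]
  have key : ∀ s : F, s ^ n = 1 →
      Polynomial.aeval (algebraMap F A s * AdjoinRoot.root _)
        (Polynomial.X ^ n - Polynomial.C b) = 0 := by
    intro s hs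
    rw [map_sub, map_pow, Polynomial.aeval_X, Polynomial.aeval_C, mul_pow, ← map_pow,
      hs, map_one, one_mul, hroot, sub_self]
  have hζ0 : ζ ≠ 0 := hζ.ne_zero hne
  have hζinv : ζ⁻¹ ^ n = 1 := by rw [inv_pow, hζ.pow_eq_one, inv_one]
  let σf : A →ₐ[F] A := AdjoinRoot.liftAlgHom _ (Algebra.ofId F A) (algebraMap F A ζ * AdjoinRoot.root _)
    (key ζ hζ.pow_eq_one)
  let σg : A →ₐ[F] A := AdjoinRoot.liftAlgHom _ (Algebra.ofId F A) (algebraMap F A ζ⁻¹ * AdjoinRoot.root _)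
    (key ζ⁻¹ hζinv)
  have hcomp : ∀ (s t : F), s * t = 1 → ∀ (h1 h2),
      (AdjoinRoot.liftAlgHom (Polynomial.X ^ n - Polynomial.C b) (Algebra.ofId F A)
          (algebraMap F A s * AdjoinRoot.root _) h1).comp
        (AdjoinRoot.liftAlgHom _ (Algebra.ofId F A) (algebraMap F A t * AdjoinRoot.root _) h2) = AlgHom.id F A := by
    intro s t hst h1 h2
    apply AdjoinRoot.algHom_ext
    simp only [AlgHom.coe_comp, Function.comp_apply, AdjoinRoot.liftAlgHom_root, map_mul,
      AlgHom.commutes, AlgHom.coe_id, id_eq]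
    erw [AlgHom.commutes]
    rw [← mul_assoc, ← map_mul, mul_comm t s, hst, map_one, one_mul]
    rfl
  let σ : A ≃ₐ[F] A := AlgEquiv.ofAlgHom σf σg
    (hcomp ζ ζ⁻¹ (mul_inv_cancel₀ hζ0) _ _) (hcomp ζ⁻¹ ζ (inv_mul_cancel₀ hζ0) _ _)
  have hσroot : σ (AdjoinRoot.root _) = algebraMap F A ζ * AdjoinRoot.root _ := by
    show σf (AdjoinRoot.root (Polynomial.X ^ n - Polynomial.C b)) = _
    exact AdjoinRoot.liftAlgHom_root (x := algebraMap F A ζ * AdjoinRoot.root _)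
      (h := key ζ hζ.pow_eq_one)
  have hσpow : ∀ k : ℕ, (σ ^ k) (AdjoinRoot.root _)
      = algebraMap F A (ζ ^ k) * AdjoinRoot.root _ := by
    intro k; induction k with
    | zero => simp
    | succ k ih =>
      rw [pow_succ, AlgEquiv.mul_apply, hσroot, map_mul, AlgEquiv.commutes, ih,
        ← mul_assoc, ← map_mul, pow_succ, mul_comm (ζ ^ k)]
  have htriv : ∀ τ : A ≃ₐ[F] A, τ (AdjoinRoot.root _) = AdjoinRoot.root _ → τ = 1 := by
    intro τ h
    have h2 : (τ : A →ₐ[F] A) = AlgHom.id F A := AdjoinRoot.algHom_ext (by exact h)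
    ext x
    exact DFunLike.congr_fun h2 x
  let pb := AdjoinRoot.powerBasis' hmonic
  have hdim : pb.dim = n := hdeg
  let Bb : Module.Basis (Fin n) F A := pb.basis.reindex (finCongr hdim)
  have hBb : ∀ i : Fin n, Bb i = AdjoinRoot.root _ ^ (i : ℕ) := by
    intro i
    simp only [Bb, Module.Basis.reindex_apply, PowerBasis.basis_eq_pow]
    rfl
  have horder : orderOf σ = n := by
    rw [orderOf_eq_iff hn]
    refine ⟨htriv _ (by rw [hσpow n, hζ.pow_eq_one, map_one, one_mul]), ?_⟩
    intro m hmn hm0 hcon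
    have h1n : 1 < n := lt_of_le_of_lt hm0 hmn
    have hri : AdjoinRoot.root (Polynomial.X ^ n - Polynomial.C b) = Bb ⟨1, h1n⟩ := by
      rw [hBb]; simp
    have hm := hσpow m
    rw [hcon, AlgEquiv.one_apply, ← Algebra.smul_def] at hm
    have h2 : (ζ ^ m - 1) • (AdjoinRoot.root (Polynomial.X ^ n - Polynomial.C b)) = 0 := by
      rw [sub_smul, one_smul, ← hm, sub_self]
    rcases smul_eq_zero.mp h2 with h3 | h3
    · exact hζ.pow_ne_one_of_pos_of_lt hm0.ne' hmn (by linear_combination h3)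
    · exact Bb.ne_zero ⟨1, h1n⟩ (hri ▸ h3)
  have hfix : ∀ a, σ a = a → a ∈ (algebraMap F A).range := by
    intro a ha
    have hσBb : ∀ i : Fin n, σ (Bb i) = ζ ^ (i : ℕ) • Bb i := by
      intro i
      rw [hBb i, map_pow, hσroot, mul_pow, ← map_pow, ← Algebra.smul_def]
    have hσa : σ a = ∑ i : Fin n, (ζ ^ (i : ℕ) * Bb.repr a i) • Bb i := by
      conv_lhs => rw [← Bb.sum_repr a]
      rw [map_sum]
      refine Finset.sum_congr rfl fun i _ => ?_
      rw [map_smul, hσBb, smul_smul, mul_comm]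
    have hco : ∀ i : Fin n, ζ ^ (i : ℕ) * Bb.repr a i = Bb.repr a i := by
      intro i
      have h4 := congrArg (fun x => Bb.repr x i) (hσa.symm.trans ha)
      have h5 : (Bb.repr (∑ i : Fin n, (ζ ^ (i : ℕ) * Bb.repr a i) • Bb i)) i
          = ζ ^ (i : ℕ) * Bb.repr a i := congrFun (Bb.repr_sum_self _) i
      exact h5.symm.trans h4
    refine ⟨Bb.repr a ⟨0, hn⟩, ?_⟩
    have hsum : a = ∑ i : Fin n, Bb.repr a i • Bb i := (Bb.sum_repr a).symm
    conv_rhs => rw [hsum]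
    rw [Finset.sum_eq_single (⟨0, hn⟩ : Fin n)]
    · rw [hBb]
      simp [Algebra.algebraMap_eq_smul_one]
    · intro j _ hj
      have hj0 : 0 < (j : ℕ) := Nat.pos_of_ne_zero (fun h => hj (Fin.ext h))
      have hzero : Bb.repr a j = 0 := by
        have h := hco j
        have h' : (ζ ^ (j : ℕ) - 1) * Bb.repr a j = 0 := by
          rw [sub_mul, one_mul, h, sub_self]
        rcases mul_eq_zero.mp h' with h'' | h''
        · exact absurd (sub_eq_zero.mp h'') (hζ.pow_ne_one_of_pos_of_lt hj0.ne' j.isLt)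
        · exact h''
      rw [hzero, zero_smul]
    · intro h; exact absurd (Finset.mem_univ _) h
  refine ⟨σ, hσroot, horder, hfix, ?_⟩
  intro B _ _ ι hι ξ hξn hξcomm hadj hdimB
  let f : FreeAlgebra F (Fin 2) →ₐ[F] B :=
    FreeAlgebra.lift F ![ι (AdjoinRoot.root _), ξ]
  have hf0 : f (FreeAlgebra.ι F 0) = ι (AdjoinRoot.root _) := by
    simp [f]
  have hf1 : f (FreeAlgebra.ι F 1) = ξ := by
    simp [f]
  have hrel : ∀ ⦃x y⦄, SymbolRel F n ζ b c x y → f x = f y := by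
    intro x y h
    cases h with
    | u => rw [map_pow, hf0, ← map_pow, hroot, AlgHom.commutes, AlgHom.commutes]
    | v => rw [map_pow, hf1, hξn, AlgHom.commutes]
    | comm =>
      rw [map_mul, map_mul, map_mul, hf0, hf1, AlgHom.commutes, hξcomm, hσroot,
        map_mul, AlgHom.commutes, mul_assoc]
  let φ : SymbolAlgebra F n ζ b c →ₐ[F] B := RingQuot.liftAlgHom F ⟨f, hrel⟩
  have hφ : ∀ x, φ (RingQuot.mkAlgHom F (SymbolRel F n ζ b c) x) = f x := fun x =>
    RingQuot.liftAlgHom_mkAlgHom_apply F f hrel x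
  have hφU : φ (symU F n ζ b c) = ι (AdjoinRoot.root _) := (hφ _).trans hf0
  have hφV : φ (symV F n ζ b c) = ξ := (hφ _).trans hf1
  have hsurj : Function.Surjective φ := by
    rw [← AlgHom.range_eq_top, eq_top_iff, ← hadj, Algebra.adjoin_le_iff]
    rintro x (⟨a, rfl⟩ | rfl)
    · have ha : a ∈ Algebra.adjoin F ({AdjoinRoot.root (Polynomial.X ^ n - Polynomial.C b)} :
          Set A) := by
        rw [AdjoinRoot.adjoinRoot_eq_top]; trivial
      have h2 : ι a ∈ (Algebra.adjoin F ({AdjoinRoot.root (Polynomial.X ^ n - Polynomial.C b)} :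
          Set A)).map ι := ⟨a, ha, rfl⟩
      rw [AlgHom.map_adjoin, Set.image_singleton] at h2
      refine Algebra.adjoin_le ?_ h2
      intro y hy
      rw [Set.mem_singleton_iff] at hy
      subst hy
      exact ⟨symU F n ζ b c, hφU⟩
    · exact ⟨symV F n ζ b c, hφV⟩
  have hspan := symbol_span_top (F := F) (n := n) (ζ := ζ) (b := b) (c := c) hn
  haveI hfinS : Module.Finite F (SymbolAlgebra F n ζ b c) :=
    ⟨Submodule.fg_def.mpr ⟨_, Set.finite_range _, hspan⟩⟩
  have hSle : Module.finrank F (SymbolAlgebra F n ζ b c) ≤ n ^ 2 := by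
    have := finrank_le_of_span_eq_top hspan
    simpa [sq] using this
  haveI hfinB : FiniteDimensional F B :=
    FiniteDimensional.of_finrank_pos (by rw [hdimB]; positivity)
  have hBle : Module.finrank F B ≤ Module.finrank F (SymbolAlgebra F n ζ b c) := by
    have h1 : LinearMap.range φ.toLinearMap = ⊤ := LinearMap.range_eq_top.mpr hsurj
    have h2 := LinearMap.finrank_range_le (R := F) φ.toLinearMap
    rwa [h1, finrank_top] at h2
  have heq : Module.finrank F (SymbolAlgebra F n ζ b c) = Module.finrank F B :=
    le_antisymm (by rw [hdimB]; exact hSle) hBle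
  have hinj : Function.Injective φ :=
    (LinearMap.injective_iff_surjective_of_finrank_eq_finrank
      (f := φ.toLinearMap) heq).mpr hsurj
  exact ⟨(AlgEquiv.ofBijective φ ⟨hinj, hsurj⟩).symm⟩
end
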